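/- Let μ be a probability measure on ℝ with integrable identity of mean zero, and suppose the trigger 0 is a median: μ((-∞,0)) = 1/2 = μ((0,∞)). Let F > 0 and C be real numbers and set π_x(θ) = (B + θ)·F − C for a real constant B. Let v < 0 (the common value of the concave utility's second derivative when insurance fully covers the loss between states, so utility levels coincide across states). Then the cross-partial of expected utility in input and payout, N = v·[ (1/2)·∫_{(-∞,0)} π_x dμ − (1/2)·∫_{(0,∞)} π_x dμ ], is strictly positive; consequently, for any D < 0 (the second-order condition ∂²U/∂x² < 0), the implicit-function-theorem comparative static ∂x*/∂γ = −N/D is strictly positive. (Proposition 2.1: with standard fishery production and an index insurance contract triggered at θ̄ = 0, optimal input and harvest always increase with the payout γ.) -/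

import Mathlib

open MeasureTheory Set

/-- Proposition 2.1: with standard fishery production (marginal profit
π_x(θ) = (B + θ)·F − C, F > 0), a mean-zero shock with median-0 trigger
(μ(−∞,0) = 1/2 = μ(0,∞)), and concave utility (common second derivative
v < 0 when insurance fully covers the loss), the cross-partial
N = v·[(1/2)·∫_{θ<0} π_x dμ − (1/2)·∫_{θ>0} π_x dμ] is strictly positive;
hence for any D < 0 (second-order condition), ∂x*/∂γ = −N/D > 0: optimal
input and harvest always increase with the payout γ. -/
theorem stmt_6 (μ : Measure ℝ) [IsProbabilityMeasure μ]
    (hInt : Integrable id μ) (hmean : ∫ θ, θ ∂μ = 0)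
    (hmed1 : μ (Iio 0) = 1/2) (hmed2 : μ (Ioi 0) = 1/2)
    (B F C v : ℝ) (hF : 0 < F) (hv : v < 0)
    (N : ℝ)
    (hN : N = v * ((1/2) * ∫ θ in Iio (0 : ℝ), ((B + θ) * F - C) ∂μ
            - (1/2) * ∫ θ in Ioi (0 : ℝ), ((B + θ) * F - C) ∂μ)) :
    0 < N ∧ ∀ D : ℝ, D < 0 → 0 < -N / D := by
  -- μ {0} = 0
  have hcompl : (Iio (0:ℝ) ∪ Ioi 0) = ({0} : Set ℝ)ᶜ := Set.Iio_union_Ioi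
  have h0 : μ ({0} : Set ℝ) = 0 := by
    have hmu : μ (Iio (0:ℝ) ∪ Ioi 0) = 1 := by
      rw [measure_union (by simp [Set.disjoint_left]; exact fun a ha => le_of_lt ha) measurableSet_Ioi,
        hmed1, hmed2, ENNReal.div_add_div_same]
      norm_num
      exact ENNReal.div_self two_ne_zero ENNReal.ofNat_ne_top
    have hset : ({0} : Set ℝ) = (Iio (0:ℝ) ∪ Ioi 0)ᶜ := by
      rw [hcompl, compl_compl]
    rw [hset, prob_compl_eq_zero_iff (measurableSet_Iio.union measurableSet_Ioi)]
    exact hmu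
  -- sum of the two set integrals of θ is 0
  have hIntIio : IntegrableOn (fun θ : ℝ => θ) (Iio 0) μ := hInt.integrableOn
  have hIntIoi : IntegrableOn (fun θ : ℝ => θ) (Ioi 0) μ := hInt.integrableOn
  have hsum : (∫ θ in Iio (0:ℝ), θ ∂μ) + ∫ θ in Ioi (0:ℝ), θ ∂μ = 0 := by
    have hdisj : Disjoint (Iio (0:ℝ)) (Ioi 0) := by
      simp only [Set.disjoint_left, mem_Iio, mem_Ioi]
      exact fun a ha => not_lt.2 (le_of_lt ha)
    have h1 : ∫ θ in (Iio (0:ℝ) ∪ Ioi 0), θ ∂μ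
        = (∫ θ in Iio (0:ℝ), θ ∂μ) + ∫ θ in Ioi (0:ℝ), θ ∂μ :=
      setIntegral_union hdisj measurableSet_Ioi hIntIio hIntIoi
    have h2 : ((Iio (0:ℝ) ∪ Ioi 0 : Set ℝ)) =ᵐ[μ] (univ : Set ℝ) := by
      rw [ae_eq_univ, hcompl, compl_compl]; exact h0
    rw [setIntegral_congr_set h2, setIntegral_univ, hmean] at h1
    exact h1.symm
  -- strict negativity of ∫ θ over Iio 0
  have haneg : (∫ θ in Iio (0:ℝ), θ ∂μ) < 0 := by
    have hpos : 0 < ∫ θ in Iio (0:ℝ), (-θ) ∂μ := by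
      rw [setIntegral_pos_iff_support_of_nonneg_ae]
      · have hsub : Iio (0:ℝ) ⊆ Function.support (fun θ : ℝ => -θ) ∩ Iio 0 := by
          intro x hx
          refine ⟨?_, hx⟩
          simp only [Function.mem_support, neg_ne_zero]
          exact ne_of_lt hx
        calc (0:ENNReal) < 1/2 := by norm_num
          _ = μ (Iio 0) := hmed1.symm
          _ ≤ μ (Function.support (fun θ : ℝ => -θ) ∩ Iio 0) := measure_mono hsub
      · filter_upwards [ae_restrict_mem measurableSet_Iio] with x hx
        simpa using le_of_lt hx
      · exact hIntIio.neg
    have hneg : (∫ θ in Iio (0:ℝ), (-θ) ∂μ) = -(∫ θ in Iio (0:ℝ), θ ∂μ) :=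
      integral_neg (fun θ : ℝ => θ)
    rw [hneg] at hpos
    linarith
  -- compute the set integrals of the profit function
  have hhalf : ((1/2 : ENNReal)).toReal = 1/2 := by
    simp [ENNReal.toReal_div]
  have key : ∀ s : Set ℝ, MeasurableSet s → μ s = 1/2 →
      (∫ θ in s, ((B + θ) * F - C) ∂μ)
        = F * (∫ θ in s, θ ∂μ) + (B * F - C) / 2 := by
    intro s hs hμs
    have h1 : ∀ θ : ℝ, (B + θ) * F - C = θ * F + (B * F - C) := by intro θ; ring
    simp_rw [h1]
    have hfi : IntegrableOn (fun θ : ℝ => θ * F) s μ := hInt.integrableOn.mul_const F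
    have hgi : IntegrableOn (fun _ : ℝ => B * F - C) s μ :=
      integrableOn_const (by
        rw [hμs]; exact (lt_of_lt_of_le (ENNReal.half_lt_self one_ne_zero ENNReal.one_ne_top) le_top).ne)
    rw [integral_add hfi hgi, integral_mul_const, setIntegral_const, measureReal_def, hμs, hhalf]
    simp [smul_eq_mul]
    ring
  have e1 := key _ measurableSet_Iio hmed1
  have e2 := key _ measurableSet_Ioi hmed2
  have hNval : N = v * F * (∫ θ in Iio (0:ℝ), θ ∂μ) := by
    rw [hN, e1, e2]
    have : (∫ θ in Ioi (0:ℝ), θ ∂μ) = -(∫ θ in Iio (0:ℝ), θ ∂μ) := by linarith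
    rw [this]; ring
  have hNpos : 0 < N := by
    rw [hNval]
    nlinarith [mul_pos (mul_pos (neg_pos.2 hv) hF) (neg_pos.2 haneg)]
  refine ⟨hNpos, fun D hD => ?_⟩
  exact div_pos_of_neg_of_neg (by linarith) hD
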